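/- Let K be a field of characteristic 0, n ≥ 2, and let K[X,Y] = K[x_1,…,x_n,y_1,…,y_n] be the polynomial algebra. For α = (α_1,…,α_{n−1}) ∈ K^{n−1} with α ≠ 0, set w_α = (α_1x_1+⋯+α_{n−1}x_{n−1})y_n − (α_1y_1+⋯+α_{n−1}y_{n−1})x_n, and let φ_α be the K-algebra endomorphism of K[X,Y] fixing x_i, y_i for i = 1,…,n−1 and sending x_n ↦ α_1x_1+⋯+α_{n−1}x_{n−1}, y_n ↦ α_1y_1+⋯+α_{n−1}y_{n−1}. If f ∈ K[X,Y] is a nonzero polynomial which is homogeneous with respect to the total degree in x_n and y_n, and φ_α(f) = 0 for some nonzero α ∈ K^{n−1}, then w_α divides f in K[X,Y]. -/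

import Mathlib

open MvPolynomial

/-- The K-algebra endomorphism `φ_α` of `K[x_1,…,x_{r+1},y_1,…,y_{r+1}]` which fixes
`x_i, y_i` for `i = 1,…,r` and sends `x_{r+1} ↦ Σ α_i x_i`, `y_{r+1} ↦ Σ α_i y_i`.
Here `x_i = X (Sum.inl i)` and `y_i = X (Sum.inr i)`. -/
noncomputable def phiAlpha (K : Type*) [CommSemiring K] (r : ℕ) (α : Fin r → K) :
    MvPolynomial (Fin (r + 1) ⊕ Fin (r + 1)) K →ₐ[K]
      MvPolynomial (Fin (r + 1) ⊕ Fin (r + 1)) K :=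
  aeval (Sum.elim
    (fun i => if (i : ℕ) < r then X (Sum.inl i)
      else ∑ j : Fin r, C (α j) * X (Sum.inl j.castSucc))
    (fun i => if (i : ℕ) < r then X (Sum.inr i)
      else ∑ j : Fin r, C (α j) * X (Sum.inr j.castSucc)))

/-- The polynomial `w_α = (Σ α_i x_i) y_{r+1} - (Σ α_i y_i) x_{r+1}`. -/
noncomputable def wAlpha (K : Type*) [CommRing K] (r : ℕ) (α : Fin r → K) :
    MvPolynomial (Fin (r + 1) ⊕ Fin (r + 1)) K :=
  (∑ j : Fin r, C (α j) * X (Sum.inl j.castSucc)) * X (Sum.inr (Fin.last r)) -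
    (∑ j : Fin r, C (α j) * X (Sum.inr j.castSucc)) * X (Sum.inl (Fin.last r))



/-- Peel off one variable of a multivariate polynomial ring. -/
noncomputable def peel (K : Type*) [CommSemiring K] {σ : Type*} [DecidableEq σ] (s₀ : σ) :
    MvPolynomial σ K ≃ₐ[K] Polynomial (MvPolynomial {s : σ // s ≠ s₀} K) :=
  (renameEquiv K (Equiv.optionSubtypeNe s₀).symm).trans (optionEquivLeft K _)

lemma peel_X_self (K : Type*) [CommSemiring K] {σ : Type*} [DecidableEq σ] (s₀ : σ) :
    peel K s₀ (X s₀) = Polynomial.X := by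
  simp [peel, Equiv.optionSubtypeNe_symm_self]

lemma peel_X_ne (K : Type*) [CommSemiring K] {σ : Type*} [DecidableEq σ] {s₀ s : σ}
    (h : s ≠ s₀) : peel K s₀ (X s) = Polynomial.C (X ⟨s, h⟩) := by
  simp [peel, Equiv.optionSubtypeNe_symm_of_ne h]

lemma peel_C (K : Type*) [CommSemiring K] {σ : Type*} [DecidableEq σ] (s₀ : σ) (a : K) :
    peel K s₀ (C a) = Polynomial.C (C a) := by
  simp [peel]

/-- A linear polynomial `u X - v` with "coprime" coefficients over a UFD is prime. -/
lemma prime_linear {R : Type*} [CommRing R] [IsDomain R] [UniqueFactorizationMonoid R]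
    {u v : R} (hu : u ≠ 0) (hcop : ∀ d : R, d ∣ u → d ∣ v → IsUnit d) :
    Prime (Polynomial.C u * Polynomial.X - Polynomial.C v) := by
  have hdeg : (Polynomial.C u * Polynomial.X - Polynomial.C v).natDegree = 1 := by
    rw [sub_eq_add_neg, ← Polynomial.C_neg]
    exact Polynomial.natDegree_linear hu
  rw [← UniqueFactorizationMonoid.irreducible_iff_prime]
  have key : ∀ g h : Polynomial R, Polynomial.C u * Polynomial.X - Polynomial.C v = g * h →
      g.natDegree = 0 → IsUnit g := by
    intro g h hgh hg
    obtain ⟨g0, rfl⟩ := Polynomial.natDegree_eq_zero.mp hg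
    have h1 : g0 ∣ u := ⟨h.coeff 1, by
      have := congrArg (fun q => Polynomial.coeff q 1) hgh
      simpa using this⟩
    have h2 : g0 ∣ v := ⟨-h.coeff 0, by
      have := congrArg (fun q => Polynomial.coeff q 0) hgh
      simp only [Polynomial.coeff_sub, Polynomial.coeff_C_mul, Polynomial.coeff_X_zero,
        mul_zero, zero_sub, Polynomial.coeff_C_zero, Polynomial.coeff_C_mul] at this
      rw [mul_neg, ← this, neg_neg]⟩
    exact Polynomial.isUnit_C.mpr (hcop g0 h1 h2)
  constructor
  · intro h
    rw [Polynomial.natDegree_eq_zero_of_isUnit h] at hdeg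
    exact zero_ne_one hdeg
  · intro g h hgh
    have hq0 : Polynomial.C u * Polynomial.X - Polynomial.C v ≠ 0 := by
      intro h0
      rw [h0] at hdeg
      simp at hdeg
    have hg0 : g ≠ 0 := by rintro rfl; simp at hgh; exact hq0 hgh
    have hh0 : h ≠ 0 := by rintro rfl; simp at hgh; exact hq0 hgh
    have hsum : g.natDegree + h.natDegree = 1 := by
      rw [← Polynomial.natDegree_mul hg0 hh0, ← hgh, hdeg]
    rcases Nat.eq_zero_or_pos g.natDegree with hg | hg
    · exact Or.inl (key g h hgh hg)
    · exact Or.inr (key h g (by rw [hgh, mul_comm]) (by omega))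

/-- A nonzero linear form in distinct variables is prime. -/
lemma prime_linear_comb {K : Type*} [Field K] {σ : Type*} [DecidableEq σ] {r : ℕ}
    (c : Fin r → K) (emb : Fin r → σ) (hemb : Function.Injective emb)
    {k : Fin r} (hk : c k ≠ 0) :
    Prime (∑ j : Fin r, C (c j) * X (emb j) : MvPolynomial σ K) := by
  set s₀ := emb k with hs₀
  rw [← MulEquiv.prime_iff ((peel K s₀).toRingEquiv.toMulEquiv)]
  have himg : (peel K s₀) (∑ j : Fin r, C (c j) * X (emb j))
      = Polynomial.C (C (c k)) * Polynomial.X -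
        Polynomial.C (-(∑ j ∈ Finset.univ.erase k,
          (if h : emb j = s₀ then 0 else C (c j) * X (⟨emb j, h⟩ : {s : σ // s ≠ s₀})))) := by
    rw [← Finset.add_sum_erase _ _ (Finset.mem_univ k), map_add, map_mul, peel_C, peel_X_self,
      map_sum, map_neg, sub_neg_eq_add]
    congr 1
    rw [map_sum]
    refine Finset.sum_congr rfl fun j hj => ?_
    have hne : emb j ≠ s₀ := fun h => (Finset.mem_erase.mp hj).1 (hemb h)
    rw [dif_neg hne, map_mul, peel_C, peel_X_ne K hne, ← Polynomial.C_mul]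
  show Prime ((peel K s₀) (∑ j : Fin r, C (c j) * X (emb j)))
  rw [himg]
  refine prime_linear (by simpa using hk) fun d hd _ => ?_
  exact isUnit_of_dvd_unit hd ((isUnit_iff_ne_zero.mpr hk).map (C : K →+* _))

lemma prime_wAlpha {K : Type*} [Field K] (r : ℕ) (α : Fin r → K) (k : Fin r)
    (hk : α k ≠ 0) : Prime (wAlpha K r α) := by
  classical
  set σ := (Fin (r + 1) ⊕ Fin (r + 1))
  set s₀ : σ := Sum.inr (Fin.last r) with hs₀
  set σ₀ := {s : σ // s ≠ s₀}
  have hinl : ∀ j : Fin (r+1), (Sum.inl j : σ) ≠ s₀ := fun j h => Sum.inl_ne_inr h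
  have hinr : ∀ j : Fin r, (Sum.inr j.castSucc : σ) ≠ s₀ := fun j h =>
    (Fin.castSucc_lt_last j).ne (Sum.inr_injective h)
  set A₀ : MvPolynomial σ₀ K :=
    ∑ j : Fin r, C (α j) * X ⟨Sum.inl j.castSucc, hinl _⟩ with hA₀
  set B₀ : MvPolynomial σ₀ K :=
    ∑ j : Fin r, C (α j) * X ⟨Sum.inr j.castSucc, hinr j⟩ with hB₀
  set Xn₀ : MvPolynomial σ₀ K := X ⟨Sum.inl (Fin.last r), hinl _⟩ with hXn₀
  have hApr : Prime A₀ := prime_linear_comb α (fun j => (⟨Sum.inl j.castSucc, hinl _⟩ : σ₀))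
    (fun a b hab =>
      Fin.castSucc_inj.mp (Sum.inl_injective (congrArg Subtype.val hab))) hk
  -- A₀ does not divide B₀ * Xn₀
  have hndvd : ¬ A₀ ∣ B₀ * Xn₀ := by
    intro hdvd
    set ev : σ₀ → K := fun t => Sum.elim (fun i => if i = Fin.last r then 1 else 0)
      (fun i => if i = k.castSucc then 1 else 0) t.val with hev
    have h1 : eval ev A₀ = 0 := by
      rw [hA₀, map_sum]
      refine Finset.sum_eq_zero fun j _ => ?_
      simp [ev, (Fin.castSucc_lt_last j).ne]
    have h2 : eval ev (B₀ * Xn₀) = α k := by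
      rw [map_mul, hXn₀, eval_X, hB₀, map_sum]
      simp only [map_mul, eval_C, eval_X]
      simp [ev, Fin.castSucc_inj]
    have := map_dvd (eval ev) hdvd
    rw [h1, h2, zero_dvd_iff] at this
    exact hk this
  -- compute the image of wAlpha under peel
  have hsumA : ∑ x : Fin r, (peel K s₀) (C (α x) * X (Sum.inl x.castSucc)) = Polynomial.C A₀ := by
    rw [hA₀, map_sum]
    refine Finset.sum_congr rfl fun j _ => ?_
    rw [map_mul, peel_C, peel_X_ne K (hinl _), ← Polynomial.C_mul]
  have hsumB : ∑ x : Fin r, (peel K s₀) (C (α x) * X (Sum.inr x.castSucc)) = Polynomial.C B₀ := by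
    rw [hB₀, map_sum]
    refine Finset.sum_congr rfl fun j _ => ?_
    rw [map_mul, peel_C, peel_X_ne K (hinr _), ← Polynomial.C_mul]
  have himg : (peel K s₀) (wAlpha K r α)
      = Polynomial.C A₀ * Polynomial.X - Polynomial.C (B₀ * Xn₀) := by
    rw [wAlpha, map_sub, map_mul, map_mul, map_sum, map_sum, peel_X_self, peel_X_ne K (hinl _),
      hsumA, hsumB, hXn₀, ← Polynomial.C_mul]
  rw [← MulEquiv.prime_iff ((peel K s₀).toRingEquiv.toMulEquiv)]
  show Prime ((peel K s₀) (wAlpha K r α))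
  rw [himg]
  refine prime_linear hApr.ne_zero fun d hd hdv => ?_
  obtain ⟨t, ht⟩ := hd
  rcases hApr.irreducible.isUnit_or_isUnit ht with h | h
  · exact h
  · exfalso
    obtain ⟨tu, rfl⟩ := h
    have : A₀ ∣ d := ⟨(tu⁻¹ : _), by rw [ht, mul_assoc, Units.mul_inv, mul_one]⟩
    exact hndvd (this.trans hdv)

lemma phiAlpha_X_inl_last {K : Type*} [CommSemiring K] (r : ℕ) (α : Fin r → K) :
    phiAlpha K r α (X (Sum.inl (Fin.last r))) =
      ∑ j : Fin r, C (α j) * X (Sum.inl j.castSucc) := by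
  simp [phiAlpha]

lemma phiAlpha_X_inr_last {K : Type*} [CommSemiring K] (r : ℕ) (α : Fin r → K) :
    phiAlpha K r α (X (Sum.inr (Fin.last r))) =
      ∑ j : Fin r, C (α j) * X (Sum.inr j.castSucc) := by
  simp [phiAlpha]

lemma phiAlpha_monomial_fixed {K : Type*} [CommSemiring K] (r : ℕ) (α : Fin r → K)
    (d : (Fin (r + 1) ⊕ Fin (r + 1)) →₀ ℕ) (c : K)
    (h1 : d (Sum.inl (Fin.last r)) = 0) (h2 : d (Sum.inr (Fin.last r)) = 0) :
    phiAlpha K r α (monomial d c) = monomial d c := by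
  rw [phiAlpha, aeval_monomial, monomial_eq, algebraMap_eq]
  congr 1
  refine Finsupp.prod_congr fun s hs => ?_
  congr 1
  rcases s with j | j
  · have hj : j ≠ Fin.last r := fun h => (Finsupp.mem_support_iff.mp hs) (h ▸ h1)
    have : (j : ℕ) < r := by
      have := Fin.val_lt_last hj
      simpa using this
    simp [this]
  · have hj : j ≠ Fin.last r := fun h => (Finsupp.mem_support_iff.mp hs) (h ▸ h2)
    have : (j : ℕ) < r := by
      have := Fin.val_lt_last hj
      simpa using this
    simp [this]


/-- Lemma 1: if `f ≠ 0` is homogeneous with respect to the total degree in `x_n, y_n`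
(here `n = m + 2 ≥ 2`) and `φ_α(f) = 0` for some nonzero `α ∈ K^{n-1}`, then `w_α ∣ f`. -/
theorem divisibility_by_w_alpha {K : Type*} [Field K] [CharZero K] (m : ℕ)
    (f : MvPolynomial (Fin (m + 2) ⊕ Fin (m + 2)) K) (hf : f ≠ 0)
    (hhom : ∃ p : ℕ, ∀ d ∈ f.support,
      d (Sum.inl (Fin.last (m + 1))) + d (Sum.inr (Fin.last (m + 1))) = p)
    (α : Fin (m + 1) → K) (hα : α ≠ 0)
    (h0 : phiAlpha K (m + 1) α f = 0) :
    wAlpha K (m + 1) α ∣ f := by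
  classical
  obtain ⟨p, hp⟩ := hhom
  obtain ⟨k, hk⟩ := Function.ne_iff.mp hα
  simp only [Pi.zero_apply] at hk
  set A : MvPolynomial (Fin (m + 2) ⊕ Fin (m + 2)) K :=
    ∑ j : Fin (m + 1), C (α j) * X (Sum.inl j.castSucc) with hA
  set B : MvPolynomial (Fin (m + 2) ⊕ Fin (m + 2)) K :=
    ∑ j : Fin (m + 1), C (α j) * X (Sum.inr j.castSucc) with hB
  set Xn : MvPolynomial (Fin (m + 2) ⊕ Fin (m + 2)) K := X (Sum.inl (Fin.last (m + 1))) with hXn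
  set Yn : MvPolynomial (Fin (m + 2) ⊕ Fin (m + 2)) K := X (Sum.inr (Fin.last (m + 1))) with hYn
  have hwdef : wAlpha K (m + 1) α = A * Yn - B * Xn := rfl
  have hwprime : Prime (wAlpha K (m + 1) α) := prime_wAlpha (m + 1) α k hk
  -- each monomial contributes a multiple of w
  have hterm : ∀ d ∈ f.support, wAlpha K (m + 1) α ∣
      A ^ p * monomial d (coeff d f) - Xn ^ p * phiAlpha K (m + 1) α (monomial d (coeff d f)) := by
    intro d hd
    set c := coeff d f with hc
    set i := d (Sum.inl (Fin.last (m + 1))) with hi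
    set j := d (Sum.inr (Fin.last (m + 1))) with hj
    have hij : i + j = p := hp d hd
    set d' := (d.erase (Sum.inl (Fin.last (m + 1)))).erase (Sum.inr (Fin.last (m + 1))) with hd'
    have hdd : Finsupp.single (Sum.inl (Fin.last (m + 1))) i +
        (Finsupp.single (Sum.inr (Fin.last (m + 1))) j + d') = d := by
      rw [hd']
      rw [show j = (d.erase (Sum.inl (Fin.last (m + 1)))) (Sum.inr (Fin.last (m + 1))) by
        rw [Finsupp.erase_ne (by simp)]]
      rw [Finsupp.single_add_erase, Finsupp.single_add_erase]
    have hmono : monomial d c = Xn ^ i * (Yn ^ j * monomial d' c) := by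
      rw [hXn, hYn, X_pow_eq_monomial, X_pow_eq_monomial, monomial_mul, monomial_mul,
        one_mul, one_mul, hdd]
    have hfix : phiAlpha K (m + 1) α (monomial d' c) = monomial d' c := by
      refine phiAlpha_monomial_fixed (m + 1) α d' c ?_ ?_
      · rw [hd', Finsupp.erase_ne (by simp), Finsupp.erase_same]
      · rw [hd', Finsupp.erase_same]
    have hphi : phiAlpha K (m + 1) α (monomial d c) = A ^ i * (B ^ j * monomial d' c) := by
      rw [hmono, map_mul, map_mul, map_pow, map_pow, phiAlpha_X_inl_last,
        phiAlpha_X_inr_last, hfix, ← hA, ← hB]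
    rw [hphi, hmono, hwdef]
    obtain rfl : p = i + j := hij.symm
    have hring : A ^ (i + j) * (Xn ^ i * (Yn ^ j * monomial d' c)) -
        Xn ^ (i + j) * (A ^ i * (B ^ j * monomial d' c)) =
        (monomial d' c * (A ^ i * Xn ^ i)) * ((A * Yn) ^ j - (B * Xn) ^ j) := by
      ring
    rw [hring]
    exact (sub_dvd_pow_sub_pow (A * Yn) (B * Xn) j).mul_left _
  have hdvd : wAlpha K (m + 1) α ∣ A ^ p * f := by
    have hsum : A ^ p * f = ∑ d ∈ f.support,
        (A ^ p * monomial d (coeff d f) -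
          Xn ^ p * phiAlpha K (m + 1) α (monomial d (coeff d f))) := by
      rw [Finset.sum_sub_distrib, ← Finset.mul_sum, ← Finset.mul_sum, ← map_sum,
        support_sum_monomial_coeff, h0, mul_zero, sub_zero]
    rw [hsum]
    exact Finset.dvd_sum hterm
  -- w does not divide A
  have hnA : ¬ wAlpha K (m + 1) α ∣ A := by
    intro hdvdA
    set ev : (Fin (m + 2) ⊕ Fin (m + 2)) → K :=
      Sum.elim (fun i => if i = k.castSucc then 1 else 0) (fun _ => 0) with hev
    have h1 : eval ev (wAlpha K (m + 1) α) = 0 := by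
      rw [hwdef, map_sub, map_mul, map_mul, hXn, hYn, eval_X, eval_X]
      simp [ev, (Fin.castSucc_lt_last k).ne']
    have h2 : eval ev A = α k := by
      rw [hA, map_sum]
      simp only [map_mul, eval_C, eval_X]
      simp [ev, Fin.castSucc_inj]
    have := map_dvd (eval ev) hdvdA
    rw [h1, h2, zero_dvd_iff] at this
    exact hk this
  rcases hwprime.dvd_or_dvd hdvd with h | h
  · exact absurd (hwprime.dvd_of_dvd_pow h) hnA
  · exact h
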